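/- The 4×4 matrix R(x) with entries R₁₁ = R₄₄ = sinh(x+γ), R₂₂ = R₃₃ = sinh(γ), R₂₃ = R₃₂ = sinh(x), and all other entries zero, satisfies the Yang–Baxter equation (R(x) ⊗ 1)(1 ⊗ R(x+y))(R(y) ⊗ 1) = (1 ⊗ R(y))(R(x+y) ⊗ 1)(1 ⊗ R(x)) as an identity of 8×8 matrices, for all complex x, y and fixed complex γ. -/
import Mathlib


open Complex
set_option maxHeartbeats 4000000

/-- The six-vertex `R`-matrix on `ℂ² ⊗ ℂ²`, with basis of `ℂ² ⊗ ℂ²` indexed by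
`Fin 2 × Fin 2` (ordering `(0,0),(0,1),(1,0),(1,1)` corresponding to `1,2,3,4`):
entries `a(x) = sinh(x+γ)` at `(1,1)` and `(4,4)`, `c(x) = sinh γ` at `(2,2)` and `(3,3)`,
and `b(x) = sinh x` at `(2,3)` and `(3,2)`; all other entries vanish. -/
noncomputable def sixVertexR (γ x : ℂ) :
    Matrix (Fin 2 × Fin 2) (Fin 2 × Fin 2) ℂ := fun p q =>
  if p = q then (if p.1 = p.2 then Complex.sinh (x + γ) else Complex.sinh γ)
  else (if p.1 = q.2 ∧ p.2 = q.1 then Complex.sinh x else 0)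

/-- `R(x) ⊗ 1` acting on `ℂ² ⊗ ℂ² ⊗ ℂ²` (the `R`-matrix on the first two factors). -/
noncomputable def sixVertexR12 (γ x : ℂ) :
    Matrix (Fin 2 × Fin 2 × Fin 2) (Fin 2 × Fin 2 × Fin 2) ℂ := fun p q =>
  sixVertexR γ x (p.1, p.2.1) (q.1, q.2.1) * (if p.2.2 = q.2.2 then 1 else 0)

/-- `1 ⊗ R(x)` acting on `ℂ² ⊗ ℂ² ⊗ ℂ²` (the `R`-matrix on the last two factors). -/
noncomputable def sixVertexR23 (γ x : ℂ) :
    Matrix (Fin 2 × Fin 2 × Fin 2) (Fin 2 × Fin 2 × Fin 2) ℂ := fun p q =>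
  (if p.1 = q.1 then 1 else 0) * sixVertexR γ x (p.2.1, p.2.2) (q.2.1, q.2.2)

/-- The six-vertex `R`-matrix satisfies the Yang–Baxter equation
`(R(x) ⊗ 1)(1 ⊗ R(x+y))(R(y) ⊗ 1) = (1 ⊗ R(y))(R(x+y) ⊗ 1)(1 ⊗ R(x))`
as an identity of `8 × 8` matrices, for all complex `x, y` and fixed complex `γ`. -/
theorem sixVertexR_yang_baxter (γ x y : ℂ) :
    sixVertexR12 γ x * sixVertexR23 γ (x + y) * sixVertexR12 γ y
      = sixVertexR23 γ y * sixVertexR12 γ (x + y) * sixVertexR23 γ x := by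
  ext p q
  fin_cases p <;> fin_cases q <;>
    simp only [Matrix.mul_apply, sixVertexR12, sixVertexR23, sixVertexR, Fintype.sum_prod_type,
      Fin.sum_univ_two, Prod.mk.injEq, Fin.zero_eq_one_iff, Fin.one_eq_zero_iff, Ne,
      OfNat.ofNat_ne_one, not_false_eq_true, and_true, true_and, and_false, false_and,
      if_true, if_false, Complex.sinh_add, Complex.cosh_add] <;>
    norm_num <;>
    first
    | ring1
    | linear_combination (Complex.sinh x * Complex.sinh y * Complex.sinh γ) * Complex.cosh_sq γ
    | linear_combination (-(Complex.sinh x * Complex.sinh y * Complex.sinh γ)) * Complex.cosh_sq γ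
    | linear_combination (Complex.sinh x * Complex.sinh γ * Complex.sinh γ) * Complex.cosh_sq y
    | linear_combination (-(Complex.sinh x * Complex.sinh γ * Complex.sinh γ)) * Complex.cosh_sq y
    | linear_combination (Complex.sinh y * Complex.sinh γ * Complex.sinh γ) * Complex.cosh_sq x
    | linear_combination (-(Complex.sinh y * Complex.sinh γ * Complex.sinh γ)) * Complex.cosh_sq x
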